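/- For a uniformly random permutation π of {1,...,n} with n ≥ 4 and 4 ≤ r ≤ n, the probability that the lexicographically first increasing triple of π is {1,3,r} equals (1/2)(1/(r-1) - 1/r) + (1/n)(1/(r-2) - 1/(r-1)). -/

import Mathlib

open Finset
attribute [local instance] Classical.propDecidable
variable {n r : ℕ}


/-- Extend a permutation of `Fin r` to `Fin n` by identity. -/
def extPerm (h : r ≤ n) (τ : Equiv.Perm (Fin r)) : Equiv.Perm (Fin n) where
  toFun x := if hx : x.1 < r then Fin.castLE h (τ ⟨x.1, hx⟩) else x
  invFun x := if hx : x.1 < r then Fin.castLE h (τ.symm ⟨x.1, hx⟩) else x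
  left_inv x := by
    by_cases hx : x.1 < r
    · simp only [hx, dif_pos]
      have h2 : ((Fin.castLE h (τ ⟨x.1, hx⟩)) : Fin n).1 < r := (τ ⟨x.1, hx⟩).2
      simp only [h2, dif_pos]
      have : (⟨(Fin.castLE h (τ ⟨x.1, hx⟩)).1, h2⟩ : Fin r) = τ ⟨x.1, hx⟩ := rfl
      rw [this, Equiv.symm_apply_apply]
      exact Fin.ext rfl
    · simp only [hx, dif_neg, not_false_iff]
  right_inv x := by
    by_cases hx : x.1 < r
    · simp only [hx, dif_pos]
      have h2 : ((Fin.castLE h (τ.symm ⟨x.1, hx⟩)) : Fin n).1 < r := (τ.symm ⟨x.1, hx⟩).2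
      simp only [h2, dif_pos]
      have : (⟨(Fin.castLE h (τ.symm ⟨x.1, hx⟩)).1, h2⟩ : Fin r) = τ.symm ⟨x.1, hx⟩ := rfl
      rw [this, Equiv.apply_symm_apply]
      exact Fin.ext rfl
    · simp only [hx, dif_neg, not_false_iff]

lemma extPerm_castLE (h : r ≤ n) (τ : Equiv.Perm (Fin r)) (i : Fin r) :
    extPerm h τ (Fin.castLE h i) = Fin.castLE h (τ i) := by
  show (if hx : _ then _ else _) = _
  have hi : ((Fin.castLE h i) : Fin n).1 < r := i.2
  simp only [hi, dif_pos]
  congr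

lemma extPerm_val_lt (h : r ≤ n) (τ : Equiv.Perm (Fin r)) (x : Fin n) :
    (extPerm h τ x).1 < r ↔ x.1 < r := by
  show (if hx : x.1 < r then _ else _ : Fin n).1 < r ↔ _
  by_cases hx : x.1 < r
  · simp only [hx, dif_pos, iff_true]; exact (τ ⟨x.1, hx⟩).2
  · simp only [hx, dif_neg, not_false_iff]

lemma extPerm_mul (h : r ≤ n) (τ₁ τ₂ : Equiv.Perm (Fin r)) :
    extPerm h (τ₁ * τ₂) = extPerm h τ₁ * extPerm h τ₂ := by
  apply Equiv.ext; intro x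
  show _ = extPerm h τ₁ (extPerm h τ₂ x)
  by_cases hx : x.1 < r
  · have h1 : extPerm h (τ₁ * τ₂) x = Fin.castLE h ((τ₁ * τ₂) ⟨x.1, hx⟩) := by
      show (if _ : x.1 < r then _ else _) = _; simp only [hx, dif_pos]
    have h2 : extPerm h τ₂ x = Fin.castLE h (τ₂ ⟨x.1, hx⟩) := by
      show (if _ : x.1 < r then _ else _) = _; simp only [hx, dif_pos]
    rw [h1, h2, extPerm_castLE]
    rfl
  · have hid : ∀ τ : Equiv.Perm (Fin r), extPerm h τ x = x := by
      intro τ; show (if _ : x.1 < r then _ else _) = _; simp only [hx, dif_neg, not_false_iff]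
    rw [hid, hid, hid]

lemma extPerm_one (h : r ≤ n) : extPerm h 1 = 1 := by
  apply Equiv.ext; intro x
  show (if hx : x.1 < r then _ else _) = x
  by_cases hx : x.1 < r
  · simp only [hx, dif_pos]; exact Fin.ext rfl
  · simp only [hx, dif_neg, not_false_iff]

lemma extPerm_symm (h : r ≤ n) (τ : Equiv.Perm (Fin r)) :
    (extPerm h τ).symm = extPerm h τ.symm := by
  have : extPerm h τ * extPerm h τ.symm = 1 := by
    rw [← extPerm_mul]
    have : τ * τ.symm = 1 := by
      apply Equiv.ext; intro x; simp
    rw [this, extPerm_one]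
  calc (extPerm h τ).symm = (extPerm h τ)⁻¹ := rfl
    _ = extPerm h τ.symm := (inv_eq_of_mul_eq_one_right this).symm


/-- rank of `π(i)` among the values at the first `r` positions -/
def patt (h : r ≤ n) (π : Equiv.Perm (Fin n)) (i : Fin r) : Fin r :=
  ⟨(univ.filter (fun j : Fin r => π (Fin.castLE h j) < π (Fin.castLE h i))).card, by
    have h0 : 0 < r := lt_of_le_of_lt (Nat.zero_le _) i.2
    have : (univ.filter (fun j : Fin r => π (Fin.castLE h j) < π (Fin.castLE h i)))
        ⊆ univ.erase i := by
      intro j hj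
      rw [Finset.mem_erase]
      refine ⟨?_, Finset.mem_univ _⟩
      rintro rfl
      exact absurd (Finset.mem_filter.mp hj).2 (lt_irrefl _)
    calc (univ.filter _).card ≤ (univ.erase i).card := Finset.card_le_card this
      _ = r - 1 := by rw [Finset.card_erase_of_mem (Finset.mem_univ _)]; simp
      _ < r := by omega⟩

lemma patt_lt_of_lt (h : r ≤ n) (π : Equiv.Perm (Fin n)) {i j : Fin r}
    (hij : π (Fin.castLE h i) < π (Fin.castLE h j)) : patt h π i < patt h π j := by
  show (univ.filter (fun j : Fin r => _)).card < (univ.filter (fun j : Fin r => _)).card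
  apply Finset.card_lt_card
  constructor
  · intro k hk
    rw [Finset.mem_filter] at hk ⊢
    exact ⟨hk.1, lt_trans hk.2 hij⟩
  · intro hsub
    have : i ∈ univ.filter (fun k : Fin r => π (Fin.castLE h k) < π (Fin.castLE h j)) :=
      Finset.mem_filter.mpr ⟨Finset.mem_univ _, hij⟩
    have := hsub this
    exact absurd (Finset.mem_filter.mp this).2 (lt_irrefl _)

lemma patt_lt_iff (h : r ≤ n) (π : Equiv.Perm (Fin n)) (i j : Fin r) :
    patt h π i < patt h π j ↔ π (Fin.castLE h i) < π (Fin.castLE h j) := by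
  constructor
  · intro hlt
    rcases lt_trichotomy (π (Fin.castLE h i)) (π (Fin.castLE h j)) with hc | hc | hc
    · exact hc
    · have : i = j := Fin.castLE_injective h (π.injective hc)
      subst this; exact absurd hlt (lt_irrefl _)
    · exact absurd hlt (lt_asymm (patt_lt_of_lt h π hc))
  · exact patt_lt_of_lt h π

lemma patt_injective (h : r ≤ n) (π : Equiv.Perm (Fin n)) :
    Function.Injective (patt h π) := by
  intro i j hij
  by_contra hne
  rcases lt_trichotomy (π (Fin.castLE h i)) (π (Fin.castLE h j)) with hc | hc | hc
  · have := patt_lt_of_lt h π hc; rw [hij] at this; exact absurd this (lt_irrefl _)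
  · exact hne (Fin.castLE_injective h (π.injective hc))
  · have := patt_lt_of_lt h π hc; rw [hij] at this; exact absurd this (lt_irrefl _)

/-- the pattern as a permutation of `Fin r` -/
noncomputable def pattPerm (h : r ≤ n) (π : Equiv.Perm (Fin n)) : Equiv.Perm (Fin r) :=
  Equiv.ofBijective (patt h π)
    (Finite.injective_iff_bijective.mp (patt_injective h π))

@[simp] lemma pattPerm_apply (h : r ≤ n) (π : Equiv.Perm (Fin n)) (i : Fin r) :
    pattPerm h π i = patt h π i := rfl

lemma patt_mul_ext (h : r ≤ n) (π : Equiv.Perm (Fin n)) (τ : Equiv.Perm (Fin r)) (i : Fin r) :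
    patt h (π * extPerm h τ) i = patt h π (τ i) := by
  apply Fin.ext
  show (univ.filter (fun j : Fin r => _)).card = (univ.filter (fun j : Fin r => _)).card
  apply Finset.card_bij (fun j _ => τ j)
  · intro j hj
    rw [Finset.mem_filter] at hj ⊢
    refine ⟨Finset.mem_univ _, ?_⟩
    have e1 : (π * extPerm h τ) (Fin.castLE h j) = π (Fin.castLE h (τ j)) := by
      show π (extPerm h τ (Fin.castLE h j)) = _
      rw [extPerm_castLE]
    have e2 : (π * extPerm h τ) (Fin.castLE h i) = π (Fin.castLE h (τ i)) := by
      show π (extPerm h τ (Fin.castLE h i)) = _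
      rw [extPerm_castLE]
    rw [e1, e2] at hj
    exact hj.2
  · intro a _ b _ hab; exact τ.injective hab
  · intro b hb
    refine ⟨τ.symm b, ?_, by simp⟩
    rw [Finset.mem_filter] at hb ⊢
    refine ⟨Finset.mem_univ _, ?_⟩
    have e1 : (π * extPerm h τ) (Fin.castLE h (τ.symm b)) = π (Fin.castLE h b) := by
      show π (extPerm h τ (Fin.castLE h (τ.symm b))) = _
      rw [extPerm_castLE, Equiv.apply_symm_apply]
    have e2 : (π * extPerm h τ) (Fin.castLE h i) = π (Fin.castLE h (τ i)) := by
      show π (extPerm h τ (Fin.castLE h i)) = _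
      rw [extPerm_castLE]
    rw [e1, e2]
    exact hb.2

lemma pattPerm_mul_ext (h : r ≤ n) (π : Equiv.Perm (Fin n)) (τ : Equiv.Perm (Fin r)) :
    pattPerm h (π * extPerm h τ) = pattPerm h π * τ := by
  apply Equiv.ext; intro i
  show patt h (π * extPerm h τ) i = patt h π (τ i)
  exact patt_mul_ext h π τ i

lemma maxLemma {m : ℕ} (hm : 1 ≤ m) (σ : Equiv.Perm (Fin m)) (a : Fin m)
    (h : ∀ j : Fin m, j ≠ a → σ j < σ a) : σ a = ⟨m - 1, by omega⟩ := by
  have hv : m - 1 < m := by omega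
  by_cases hc : σ.symm ⟨m - 1, hv⟩ = a
  · rw [← hc, Equiv.apply_symm_apply]
  · have h1 := h _ hc
    rw [Equiv.apply_symm_apply, Fin.lt_def] at h1
    simp only [Fin.val_mk] at h1
    have := (σ a).2
    omega

lemma secondLemma {m : ℕ} (hm : 2 ≤ m) (σ : Equiv.Perm (Fin m)) (a b : Fin m) (hab : a ≠ b)
    (ha : σ a = ⟨m - 1, by omega⟩)
    (h : ∀ j : Fin m, j ≠ a → j ≠ b → σ j < σ b) : σ b = ⟨m - 2, by omega⟩ := by
  have hv : m - 2 < m := by omega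
  by_cases hc : σ.symm ⟨m - 2, hv⟩ = b
  · rw [← hc, Equiv.apply_symm_apply]
  · by_cases hc' : σ.symm ⟨m - 2, hv⟩ = a
    · have he : σ a = ⟨m - 2, hv⟩ := by rw [← hc', Equiv.apply_symm_apply]
      rw [ha] at he
      have := congrArg Fin.val he
      simp only [Fin.val_mk] at this
      omega
    · have h1 := h _ hc' hc
      rw [Equiv.apply_symm_apply, Fin.lt_def] at h1
      simp only [Fin.val_mk] at h1
      have hba : σ b ≠ σ a := fun he => hab (σ.injective he).symm
      rw [ha] at hba
      have e1 : (σ b).1 ≠ m - 1 := fun he => hba (Fin.ext he)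
      have := (σ b).2
      omega

lemma thirdLemma {m : ℕ} (hm : 3 ≤ m) (σ : Equiv.Perm (Fin m)) (a b c : Fin m)
    (hab : a ≠ b) (hac : a ≠ c) (hbc : b ≠ c)
    (ha : σ a = ⟨m - 1, by omega⟩) (hb : σ b = ⟨m - 2, by omega⟩)
    (h : ∀ j : Fin m, j ≠ a → j ≠ b → j ≠ c → σ j < σ c) : σ c = ⟨m - 3, by omega⟩ := by
  have hv : m - 3 < m := by omega
  by_cases hc1 : σ.symm ⟨m - 3, hv⟩ = c
  · have he := Equiv.apply_symm_apply σ ⟨m - 3, hv⟩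
    rw [hc1] at he
    exact he
  · by_cases hc' : σ.symm ⟨m - 3, hv⟩ = a
    · have he : σ a = ⟨m - 3, hv⟩ := by rw [← hc', Equiv.apply_symm_apply]
      rw [ha] at he
      have := congrArg Fin.val he
      simp only [Fin.val_mk] at this
      omega
    · by_cases hc'' : σ.symm ⟨m - 3, hv⟩ = b
      · have he : σ b = ⟨m - 3, hv⟩ := by rw [← hc'', Equiv.apply_symm_apply]
        rw [hb] at he
        have := congrArg Fin.val he
        simp only [Fin.val_mk] at this
        omega
      · have h1 := h _ hc' hc'' hc1
        rw [Equiv.apply_symm_apply, Fin.lt_def] at h1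
        simp only [Fin.val_mk] at h1
        have h3 : σ c ≠ σ a := fun he => hac (σ.injective he).symm
        have h4 : σ c ≠ σ b := fun he => hbc (σ.injective he).symm
        rw [ha] at h3; rw [hb] at h4
        have e3 : (σ c).1 ≠ m - 1 := fun he => h3 (Fin.ext he)
        have e4 : (σ c).1 ≠ m - 2 := fun he => h4 (Fin.ext he)
        have := (σ c).2
        omega

/-- The lexicographically first increasing (I-II-III) pattern of `π` occurs at
positions `a < b < c` (0-indexed elements of `Fin n`). -/
def FirstIncTripleAt (n : ℕ) (π : Equiv.Perm (Fin n)) (a b c : Fin n) : Prop :=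
  a < b ∧ b < c ∧ π a < π b ∧ π b < π c ∧
  ∀ d e f : Fin n, d < e → e < f →
    (d < a ∨ (d = a ∧ (e < b ∨ (e = b ∧ f < c)))) →
    ¬ (π d < π e ∧ π e < π f)

lemma logicChar {n r : ℕ} (hn : 4 ≤ n) (hr4 : 4 ≤ r) (hrn : r ≤ n) (π : Equiv.Perm (Fin n)) :
    FirstIncTripleAt n π ⟨0, by linarith⟩ ⟨2, by linarith⟩ ⟨r - 1, Nat.lt_of_lt_of_le (by omega) hrn⟩ ↔
    ((π ⟨1, by omega⟩ < π ⟨0, by linarith⟩ ∨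
        ∀ f : Fin n, f ≠ ⟨1, by omega⟩ → π f < π ⟨1, by omega⟩) ∧
      π ⟨0, by linarith⟩ < π ⟨2, by linarith⟩ ∧ π ⟨2, by linarith⟩ < π ⟨r - 1, Nat.lt_of_lt_of_le (by omega) hrn⟩ ∧
      ∀ f : Fin n, 2 < f.1 → f.1 < r - 1 → π f < π ⟨2, by linarith⟩) := by
  have h0 : 0 < n := by omega
  have h1 : 1 < n := by omega
  have h2 : 2 < n := by omega
  have hc : r - 1 < n := by omega
  have hπne : ∀ x y : Fin n, x ≠ y → π x ≠ π y := fun x y hxy he => hxy (π.injective he)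
  constructor
  · rintro ⟨-, -, h02, h2c, M⟩
    have mids : ∀ f : Fin n, 2 < f.1 → f.1 < r - 1 → π f < π ⟨2, h2⟩ := by
      intro f h2f hfr
      have hM := M ⟨0, h0⟩ ⟨2, h2⟩ f (Fin.mk_lt_mk.mpr (by omega)) (by rw [Fin.lt_def]; exact h2f)
        (Or.inr ⟨rfl, Or.inr ⟨rfl, by rw [Fin.lt_def]; exact hfr⟩⟩)
      have hne : π f ≠ π ⟨2, h2⟩ := hπne _ _ (fun he => by
        have := congrArg Fin.val he; simp only [Fin.val_mk] at this; omega)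
      have : ¬ π ⟨2, h2⟩ < π f := fun hh => hM ⟨h02, hh⟩
      exact lt_of_le_of_ne (le_of_not_gt this) hne
    refine ⟨?_, h02, h2c, mids⟩
    rcases lt_trichotomy (π ⟨1, h1⟩) (π ⟨0, h0⟩) with hx | hx | hx
    · exact Or.inl hx
    · exact absurd hx (hπne _ _ (fun he => by
        have := congrArg Fin.val he; simp only [Fin.val_mk] at this; omega))
    · right
      intro f hf
      by_cases hf0 : f = ⟨0, h0⟩
      · rw [hf0]; exact hx
      · have hf0' : f.1 ≠ 0 := fun hh => hf0 (Fin.ext hh)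
        have hf1' : f.1 ≠ 1 := fun hh => hf (Fin.ext hh)
        have hM := M ⟨0, h0⟩ ⟨1, h1⟩ f (Fin.mk_lt_mk.mpr (by omega))
          (by rw [Fin.lt_def]; simp only [Fin.val_mk]; omega)
          (Or.inr ⟨rfl, Or.inl (Fin.mk_lt_mk.mpr (by omega))⟩)
        have hne : π f ≠ π ⟨1, h1⟩ := hπne _ _ hf
        have : ¬ π ⟨1, h1⟩ < π f := fun hh => hM ⟨hx, hh⟩
        exact lt_of_le_of_ne (le_of_not_gt this) hne
  · rintro ⟨hcase, h02, h2c, mids⟩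
    refine ⟨Fin.mk_lt_mk.mpr (by omega), Fin.mk_lt_mk.mpr (by omega), h02, h2c, ?_⟩
    rintro d e f hde hef hlex ⟨hde', hef'⟩
    rcases hlex with hd | ⟨hd, hrest⟩
    · rw [Fin.lt_def] at hd; simp only [Fin.val_mk] at hd; omega
    · have hdv : d.1 = 0 := congrArg Fin.val hd
      rcases hrest with he | ⟨he, hf⟩
      · have hev : e.1 = 1 := by
          rw [Fin.lt_def] at he hde; simp only [Fin.val_mk] at he; omega
        have he1 : e = ⟨1, h1⟩ := Fin.ext hev
        have hd0 : d = ⟨0, h0⟩ := Fin.ext hdv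
        rw [hd0, he1] at hde'
        rw [he1] at hef'
        rcases hcase with hx | hx
        · exact absurd hde' (lt_asymm hx)
        · have hfne : f ≠ ⟨1, h1⟩ := by
            intro hfe
            rw [hfe, ← he1] at hef'
            exact absurd hef' (lt_irrefl _)
          exact absurd hef' (lt_asymm (hx f hfne))
      · have hev : e.1 = 2 := congrArg Fin.val he
        have hfv : 2 < f.1 ∧ f.1 < r - 1 := by
          rw [Fin.lt_def] at hf hef; simp only [Fin.val_mk] at hf; omega
        have := mids f hfv.1 hfv.2
        rw [he] at hef'
        exact absurd hef' (lt_asymm this)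

lemma charD1 {n r : ℕ} (hn : 4 ≤ n) (hr4 : 4 ≤ r) (hrn : r ≤ n) (π : Equiv.Perm (Fin n)) :
    (π ⟨1, by omega⟩ < π ⟨0, by linarith⟩ ∧ π ⟨0, by linarith⟩ < π ⟨2, by linarith⟩ ∧
      π ⟨2, by linarith⟩ < π ⟨r - 1, Nat.lt_of_lt_of_le (by omega) hrn⟩ ∧
      ∀ f : Fin n, 2 < f.1 → f.1 < r - 1 → π f < π ⟨2, by linarith⟩) ↔
    (pattPerm hrn π ⟨r - 1, by omega⟩ = ⟨r - 1, by omega⟩ ∧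
      pattPerm hrn π ⟨2, by linarith⟩ = ⟨r - 2, by omega⟩ ∧
      pattPerm hrn π ⟨1, by omega⟩ < pattPerm hrn π ⟨0, by linarith⟩) := by
  have h0 : 0 < n := by omega
  have h1 : 1 < n := by omega
  have h2 : 2 < n := by omega
  have hcn : r - 1 < n := by omega
  have q0 : 0 < r := by omega
  have q1 : 1 < r := by omega
  have q2 : 2 < r := by omega
  have ql : r - 1 < r := by omega
  set σ := pattPerm hrn π with hσ
  have plt : ∀ i j : Fin r, σ i < σ j ↔ π (Fin.castLE hrn i) < π (Fin.castLE hrn j) := by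
    intro i j; exact patt_lt_iff hrn π i j
  have inj : ∀ i j : Fin r, σ i = σ j → i = j := fun i j h => σ.injective h
  constructor
  · rintro ⟨h10, h02, h2c, mids⟩
    have hmax : σ ⟨r - 1, ql⟩ = ⟨r - 1, by omega⟩ := by
      apply maxLemma (by omega) σ
      intro j hj
      have hjv : j.1 ≠ r - 1 := fun hh => hj (Fin.ext hh)
      rw [plt]
      have hcast : Fin.castLE hrn (⟨r - 1, ql⟩ : Fin r) = (⟨r - 1, hcn⟩ : Fin n) := rfl
      rw [hcast]
      have hj2 : j.1 = 0 ∨ j.1 = 1 ∨ j.1 = 2 ∨ (2 < j.1 ∧ j.1 < r - 1) := by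
        have := j.2; omega
      rcases hj2 with hv | hv | hv | hv
      · have : Fin.castLE hrn j = (⟨0, h0⟩ : Fin n) := Fin.ext hv
        rw [this]; exact lt_trans h02 h2c
      · have : Fin.castLE hrn j = (⟨1, h1⟩ : Fin n) := Fin.ext hv
        rw [this]; exact lt_trans (lt_trans h10 h02) h2c
      · have : Fin.castLE hrn j = (⟨2, h2⟩ : Fin n) := Fin.ext hv
        rw [this]; exact h2c
      · exact lt_trans (mids (Fin.castLE hrn j) hv.1 hv.2) h2c
    have hsec : σ ⟨2, q2⟩ = ⟨r - 2, by omega⟩ := by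
      apply secondLemma (by omega) σ ⟨r - 1, ql⟩ ⟨2, q2⟩
        (fun hh => by have := congrArg Fin.val hh; simp only [Fin.val_mk] at this; omega) hmax
      intro j hjl hj2
      have hjlv : j.1 ≠ r - 1 := fun hh => hjl (Fin.ext hh)
      have hj2v : j.1 ≠ 2 := fun hh => hj2 (Fin.ext hh)
      rw [plt]
      have hcast : Fin.castLE hrn (⟨2, q2⟩ : Fin r) = (⟨2, h2⟩ : Fin n) := rfl
      rw [hcast]
      have hj3 : j.1 = 0 ∨ j.1 = 1 ∨ (2 < j.1 ∧ j.1 < r - 1) := by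
        have := j.2; omega
      rcases hj3 with hv | hv | hv
      · have : Fin.castLE hrn j = (⟨0, h0⟩ : Fin n) := Fin.ext hv
        rw [this]; exact h02
      · have : Fin.castLE hrn j = (⟨1, h1⟩ : Fin n) := Fin.ext hv
        rw [this]; exact lt_trans h10 h02
      · exact mids (Fin.castLE hrn j) hv.1 hv.2
    exact ⟨hmax, hsec, (plt _ _).mpr h10⟩
  · rintro ⟨hl, hs, h10⟩
    have hπ10 : π ⟨1, h1⟩ < π ⟨0, h0⟩ := (plt _ _).mp h10
    have hne : ∀ (j : Fin r) (w : ℕ) (hw : w < r), j ≠ ⟨w, hw⟩ → σ j ≠ σ ⟨w, hw⟩ :=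
      fun j w hw hj hh => hj (inj _ _ hh)
    have low : ∀ j : Fin r, j.1 ≠ r - 1 → j.1 ≠ 2 → (σ j).1 < r - 2 := by
      intro j hjl hj2
      have e1 : σ j ≠ σ ⟨r - 1, ql⟩ := hne j (r-1) ql (fun hh => hjl (congrArg Fin.val hh))
      have e2 : σ j ≠ σ ⟨2, q2⟩ := hne j 2 q2 (fun hh => hj2 (congrArg Fin.val hh))
      rw [hl] at e1; rw [hs] at e2
      have e1' : (σ j).1 ≠ r - 1 := fun hh => e1 (Fin.ext hh)
      have e2' : (σ j).1 ≠ r - 2 := fun hh => e2 (Fin.ext hh)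
      have := (σ j).2
      omega
    have hv2 : (σ ⟨2, q2⟩).1 = r - 2 := congrArg Fin.val hs
    have hvl : (σ ⟨r - 1, ql⟩).1 = r - 1 := congrArg Fin.val hl
    have h02 : π ⟨0, h0⟩ < π ⟨2, h2⟩ := by
      refine (plt ⟨0, q0⟩ ⟨2, q2⟩).mp ?_
      have := low ⟨0, q0⟩ (show (0:ℕ) ≠ r - 1 by omega) (show (0:ℕ) ≠ 2 by omega)
      rw [Fin.lt_def]
      omega
    have h2c : π ⟨2, h2⟩ < π ⟨r - 1, hcn⟩ := by
      refine (plt ⟨2, q2⟩ ⟨r - 1, ql⟩).mp ?_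
      rw [Fin.lt_def]
      omega
    refine ⟨hπ10, h02, h2c, ?_⟩
    intro f h2f hfr
    have hjr : f.1 < r := by omega
    have hcast : Fin.castLE hrn (⟨f.1, hjr⟩ : Fin r) = f := Fin.ext rfl
    have := low ⟨f.1, hjr⟩ (show f.1 ≠ r - 1 by omega) (show f.1 ≠ 2 by omega)
    have hlt : σ ⟨f.1, hjr⟩ < σ ⟨2, q2⟩ := by
      rw [Fin.lt_def]; omega
    have := (plt _ _).mp hlt
    rw [hcast] at this
    exact this

lemma charD2 {n r : ℕ} (hn : 4 ≤ n) (hr4 : 4 ≤ r) (hrn : r ≤ n) (π : Equiv.Perm (Fin n)) :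
    ((∀ f : Fin n, f ≠ ⟨1, by omega⟩ → π f < π ⟨1, by omega⟩) ∧
      π ⟨0, by linarith⟩ < π ⟨2, by linarith⟩ ∧ π ⟨2, by linarith⟩ < π ⟨r - 1, Nat.lt_of_lt_of_le (by omega) hrn⟩ ∧
      ∀ f : Fin n, 2 < f.1 → f.1 < r - 1 → π f < π ⟨2, by linarith⟩) ↔
    ((π.symm ⟨n - 1, by omega⟩).1 < r ∧
      pattPerm hrn π ⟨1, by omega⟩ = ⟨r - 1, by omega⟩ ∧
      pattPerm hrn π ⟨r - 1, by omega⟩ = ⟨r - 2, by omega⟩ ∧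
      pattPerm hrn π ⟨2, by linarith⟩ = ⟨r - 3, by omega⟩) := by
  have h0 : 0 < n := by omega
  have h1 : 1 < n := by omega
  have h2 : 2 < n := by omega
  have hcn : r - 1 < n := by omega
  have htn : n - 1 < n := by omega
  have q0 : 0 < r := by omega
  have q1 : 1 < r := by omega
  have q2 : 2 < r := by omega
  have ql : r - 1 < r := by omega
  set σ := pattPerm hrn π with hσ
  have plt : ∀ i j : Fin r, σ i < σ j ↔ π (Fin.castLE hrn i) < π (Fin.castLE hrn j) := by
    intro i j; exact patt_lt_iff hrn π i j
  constructor
  · rintro ⟨hglob, h02, h2c, mids⟩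
    have hπtop : π ⟨1, h1⟩ = ⟨n - 1, htn⟩ := maxLemma (by omega) π ⟨1, h1⟩ hglob
    have hsymm : π.symm ⟨n - 1, htn⟩ = ⟨1, h1⟩ := by
      rw [← hπtop, Equiv.symm_apply_apply]
    have hpos : (π.symm ⟨n - 1, htn⟩).1 < r := by rw [hsymm]; exact q1
    have hmax : σ ⟨1, q1⟩ = ⟨r - 1, by omega⟩ := by
      apply maxLemma (by omega) σ
      intro j hj
      have hjv : j.1 ≠ 1 := fun hh => hj (Fin.ext hh)
      rw [plt]
      have hc1 : Fin.castLE hrn (⟨1, q1⟩ : Fin r) = (⟨1, h1⟩ : Fin n) := rfl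
      rw [hc1]
      exact hglob _ (fun hh => hjv (congrArg Fin.val hh))
    have hsec : σ ⟨r - 1, ql⟩ = ⟨r - 2, by omega⟩ := by
      apply secondLemma (by omega) σ ⟨1, q1⟩ ⟨r - 1, ql⟩
        (fun hh => by have := congrArg Fin.val hh; simp only [Fin.val_mk] at this; omega) hmax
      intro j hj1 hjl
      have hj1v : j.1 ≠ 1 := fun hh => hj1 (Fin.ext hh)
      have hjlv : j.1 ≠ r - 1 := fun hh => hjl (Fin.ext hh)
      rw [plt]
      have hcl : Fin.castLE hrn (⟨r - 1, ql⟩ : Fin r) = (⟨r - 1, hcn⟩ : Fin n) := rfl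
      rw [hcl]
      have hj3 : j.1 = 0 ∨ j.1 = 2 ∨ (2 < j.1 ∧ j.1 < r - 1) := by
        have := j.2; omega
      rcases hj3 with hv | hv | hv
      · have : Fin.castLE hrn j = (⟨0, h0⟩ : Fin n) := Fin.ext hv
        rw [this]; exact lt_trans h02 h2c
      · have : Fin.castLE hrn j = (⟨2, h2⟩ : Fin n) := Fin.ext hv
        rw [this]; exact h2c
      · exact lt_trans (mids (Fin.castLE hrn j) hv.1 hv.2) h2c
    have hthd : σ ⟨2, q2⟩ = ⟨r - 3, by omega⟩ := by
      apply thirdLemma (by omega) σ ⟨1, q1⟩ ⟨r - 1, ql⟩ ⟨2, q2⟩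
        (fun hh => by have := congrArg Fin.val hh; simp only [Fin.val_mk] at this; omega)
        (fun hh => by have := congrArg Fin.val hh; simp only [Fin.val_mk] at this; omega)
        (fun hh => by have := congrArg Fin.val hh; simp only [Fin.val_mk] at this; omega)
        hmax hsec
      intro j hj1 hjl hj2
      have hj1v : j.1 ≠ 1 := fun hh => hj1 (Fin.ext hh)
      have hjlv : j.1 ≠ r - 1 := fun hh => hjl (Fin.ext hh)
      have hj2v : j.1 ≠ 2 := fun hh => hj2 (Fin.ext hh)
      rw [plt]
      have hc2 : Fin.castLE hrn (⟨2, q2⟩ : Fin r) = (⟨2, h2⟩ : Fin n) := rfl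
      rw [hc2]
      have hj3 : j.1 = 0 ∨ (2 < j.1 ∧ j.1 < r - 1) := by
        have := j.2; omega
      rcases hj3 with hv | hv
      · have : Fin.castLE hrn j = (⟨0, h0⟩ : Fin n) := Fin.ext hv
        rw [this]; exact h02
      · exact mids (Fin.castLE hrn j) hv.1 hv.2
    exact ⟨hpos, hmax, hsec, hthd⟩
  · rintro ⟨hpos, h1top, hltop, h2top⟩
    have hv1 : (σ ⟨1, q1⟩).1 = r - 1 := congrArg Fin.val h1top
    have hvl : (σ ⟨r - 1, ql⟩).1 = r - 2 := congrArg Fin.val hltop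
    have hv2 : (σ ⟨2, q2⟩).1 = r - 3 := congrArg Fin.val h2top
    have inj : ∀ i j : Fin r, σ i = σ j → i = j := fun i j h => σ.injective h
    have hc0 : Fin.castLE hrn (⟨(π.symm ⟨n - 1, htn⟩).1, hpos⟩ : Fin r)
        = π.symm ⟨n - 1, htn⟩ := Fin.ext rfl
    have hπtop : π ⟨1, h1⟩ = ⟨n - 1, htn⟩ := by
      by_cases hj : (⟨(π.symm ⟨n - 1, htn⟩).1, hpos⟩ : Fin r) = ⟨1, q1⟩
      · have hs : π.symm ⟨n - 1, htn⟩ = ⟨1, h1⟩ := by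
          rw [← hc0, hj]; exact Fin.ext rfl
        rw [← hs, Equiv.apply_symm_apply]
      · exfalso
        have hne : σ ⟨(π.symm ⟨n - 1, htn⟩).1, hpos⟩ ≠ σ ⟨1, q1⟩ :=
          fun he => hj (inj _ _ he)
        have hv : (σ ⟨(π.symm ⟨n - 1, htn⟩).1, hpos⟩).1 ≠ r - 1 :=
          fun he => hne (Fin.ext (he.trans hv1.symm))
        have hlt : σ ⟨(π.symm ⟨n - 1, htn⟩).1, hpos⟩ < σ ⟨1, q1⟩ := by
          rw [Fin.lt_def]
          have := (σ ⟨(π.symm ⟨n - 1, htn⟩).1, hpos⟩).2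
          omega
        have hval := (plt _ _).mp hlt
        rw [hc0, Equiv.apply_symm_apply] at hval
        have hd : n - 1 < (π (Fin.castLE hrn ⟨1, q1⟩)).1 := Fin.lt_def.mp hval
        have := (π (Fin.castLE hrn ⟨1, q1⟩)).2
        omega
    have hsymm : π.symm ⟨n - 1, htn⟩ = ⟨1, h1⟩ := by
      rw [← hπtop, Equiv.symm_apply_apply]
    have hglob : ∀ f : Fin n, f ≠ ⟨1, h1⟩ → π f < π ⟨1, h1⟩ := by
      intro f hf
      have hne : (π f).1 ≠ n - 1 := by
        intro he
        have : π f = ⟨n - 1, htn⟩ := Fin.ext he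
        have : f = π.symm ⟨n - 1, htn⟩ := by rw [← this, Equiv.symm_apply_apply]
        exact hf (this.trans hsymm)
      rw [hπtop]
      have := (π f).2
      exact Fin.lt_def.mpr (show (π f).1 < n - 1 by omega)
    have low : ∀ j : Fin r, j.1 ≠ 1 → j.1 ≠ r - 1 → j.1 ≠ 2 → (σ j).1 < r - 3 := by
      intro j ha hb hc
      have e1 : (σ j).1 ≠ r - 1 := fun he => ha (congrArg Fin.val (inj _ _ (Fin.ext (he.trans hv1.symm))))
      have e2 : (σ j).1 ≠ r - 2 := fun he => hb (congrArg Fin.val (inj _ _ (Fin.ext (he.trans hvl.symm))))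
      have e3 : (σ j).1 ≠ r - 3 := fun he => hc (congrArg Fin.val (inj _ _ (Fin.ext (he.trans hv2.symm))))
      have := (σ j).2
      omega
    have h02 : π ⟨0, h0⟩ < π ⟨2, h2⟩ := by
      refine (plt ⟨0, q0⟩ ⟨2, q2⟩).mp ?_
      have := low ⟨0, q0⟩ (show (0:ℕ) ≠ 1 by omega) (show (0:ℕ) ≠ r - 1 by omega)
        (show (0:ℕ) ≠ 2 by omega)
      rw [Fin.lt_def]
      omega
    have h2c : π ⟨2, h2⟩ < π ⟨r - 1, hcn⟩ := by
      refine (plt ⟨2, q2⟩ ⟨r - 1, ql⟩).mp ?_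
      rw [Fin.lt_def]
      omega
    refine ⟨hglob, h02, h2c, ?_⟩
    intro f h2f hfr
    have hjr : f.1 < r := by omega
    have hcast : Fin.castLE hrn (⟨f.1, hjr⟩ : Fin r) = f := Fin.ext rfl
    have := low ⟨f.1, hjr⟩ (show f.1 ≠ 1 by omega) (show f.1 ≠ r - 1 by omega)
      (show f.1 ≠ 2 by omega)
    have hlt : σ ⟨f.1, hjr⟩ < σ ⟨2, q2⟩ := by
      rw [Fin.lt_def]; omega
    have hres := (plt _ _).mp hlt
    rw [hcast] at hres
    exact hres

-- fiber counting lemma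
lemma fib {X T : Type*} [Fintype X] (s : Finset X) (f : X → T) (ts u : Finset T)
    (hu : u ⊆ ts) (h1 : ∀ x ∈ s, f x ∈ ts)
    (h2 : ∀ t₁ ∈ ts, ∀ t₂ ∈ ts,
      (s.filter (fun x => f x = t₁)).card = (s.filter (fun x => f x = t₂)).card) :
    (s.filter (fun x => f x ∈ u)).card * ts.card = u.card * s.card := by
  classical
  rcases ts.eq_empty_or_nonempty with h | ⟨t₀, ht₀⟩
  · subst h
    have hu' : u = ∅ := Finset.subset_empty.mp hu
    have hs : s = ∅ := by
      rw [Finset.eq_empty_iff_forall_notMem]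
      intro x hx; exact absurd (h1 x hx) (by simp)
    simp [hu', hs]
  · set m := (s.filter (fun x => f x = t₀)).card with hm
    have key : ∀ v : Finset T, v ⊆ ts → (s.filter (fun x => f x ∈ v)).card = v.card * m := by
      intro v hv
      have := Finset.card_eq_sum_card_fiberwise
        (f := f) (s := s.filter (fun x => f x ∈ v)) (t := v)
        (fun x hx => (Finset.mem_filter.mp hx).2)
      rw [this]
      have : ∀ t ∈ v, ((s.filter (fun x => f x ∈ v)).filter (fun x => f x = t)).card = m := by
        intro t ht
        have : (s.filter (fun x => f x ∈ v)).filter (fun x => f x = t)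
            = s.filter (fun x => f x = t) := by
          ext x
          simp only [Finset.mem_filter]
          constructor
          · rintro ⟨⟨hx, -⟩, he⟩; exact ⟨hx, he⟩
          · rintro ⟨hx, he⟩; exact ⟨⟨hx, he ▸ ht⟩, he⟩
        rw [this]
        exact h2 t (hv ht) t₀ ht₀
      rw [Finset.sum_congr rfl this, Finset.sum_const, smul_eq_mul]
    have hs : s.card = ts.card * m := by
      have : s.filter (fun x => f x ∈ ts) = s := by
        apply Finset.filter_true_of_mem h1
      rw [← this, key ts subset_rfl]
    rw [key u hu, hs]; ring

lemma feq {X T : Type*} [Fintype X] (s : Finset X) (f : X → T) (e : X ≃ X) (t₁ t₂ : T)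
    (hs : ∀ x ∈ s, e x ∈ s) (hs' : ∀ x ∈ s, e.symm x ∈ s)
    (hf : ∀ x ∈ s, f x = t₁ → f (e x) = t₂)
    (hf' : ∀ x ∈ s, f x = t₂ → f (e.symm x) = t₁) :
    (s.filter (fun x => f x = t₁)).card = (s.filter (fun x => f x = t₂)).card := by
  classical
  apply Finset.card_bij' (fun x _ => e x) (fun x _ => e.symm x)
  · intro a ha
    have := Finset.mem_filter.mp ha
    exact Finset.mem_filter.mpr ⟨hs a this.1, hf a this.1 this.2⟩
  · intro a ha
    have := Finset.mem_filter.mp ha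
    exact Finset.mem_filter.mpr ⟨hs' a this.1, hf' a this.1 this.2⟩
  · intro a _; simp
  · intro a _; simp

lemma stepCount {m : ℕ} (s : Finset (Equiv.Perm (Fin m))) (a : Fin m) (ts : Finset (Fin m))
    (hmem : ∀ σ ∈ s, σ a ∈ ts)
    (hpres : ∀ v₁ ∈ ts, ∀ v₂ ∈ ts, ∀ σ ∈ s, Equiv.swap v₁ v₂ * σ ∈ s)
    (v : Fin m) (hv : v ∈ ts) :
    (s.filter (fun σ => σ a = v)).card * ts.card = s.card := by
  classical
  have := fib s (fun σ => σ a) ts {v} (Finset.singleton_subset_iff.mpr hv) hmem ?h2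
  · simpa using this
  case h2 =>
    intro t₁ ht₁ t₂ ht₂
    apply feq s (fun σ => σ a) (Equiv.mulLeft (Equiv.swap t₁ t₂)) t₁ t₂
    · intro σ hσ; exact hpres t₁ ht₁ t₂ ht₂ σ hσ
    · intro σ hσ
      have : (Equiv.mulLeft (Equiv.swap t₁ t₂)).symm σ = Equiv.swap t₁ t₂ * σ := by
        simp [Equiv.swap_inv]
      rw [this]; exact hpres t₁ ht₁ t₂ ht₂ σ hσ
    · intro σ _ hσa
      show (Equiv.swap t₁ t₂ * σ) a = t₂
      show Equiv.swap t₁ t₂ (σ a) = t₂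
      rw [hσa, Equiv.swap_apply_left]
    · intro σ _ hσa
      have he : (Equiv.mulLeft (Equiv.swap t₁ t₂)).symm σ = Equiv.swap t₁ t₂ * σ := by
        simp [Equiv.swap_inv]
      rw [he]
      show Equiv.swap t₁ t₂ (σ a) = t₁
      rw [hσa, Equiv.swap_apply_right]

lemma twoPointCount {m : ℕ} (a₁ a₂ : Fin m) (v₁ v₂ : Fin m) (ha : a₁ ≠ a₂) (hv : v₁ ≠ v₂) :
    (univ.filter (fun σ : Equiv.Perm (Fin m) => σ a₁ = v₁ ∧ σ a₂ = v₂)).card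
      * ((m - 1) * m) = m.factorial := by
  classical
  have step1 : ((univ : Finset (Equiv.Perm (Fin m))).filter (fun σ => σ a₁ = v₁)).card * m
      = m.factorial := by
    have := stepCount univ a₁ univ (fun σ _ => Finset.mem_univ _)
      (fun _ _ _ _ _ _ => Finset.mem_univ _) v₁ (Finset.mem_univ _)
    rwa [Finset.card_univ, Finset.card_univ, Fintype.card_fin, Fintype.card_perm,
      Fintype.card_fin] at this
  have step2 : ((univ.filter (fun σ : Equiv.Perm (Fin m) => σ a₁ = v₁)).filter
      (fun σ => σ a₂ = v₂)).card * (m - 1)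
      = (univ.filter (fun σ : Equiv.Perm (Fin m) => σ a₁ = v₁)).card := by
    have hts : (univ.erase v₁ : Finset (Fin m)).card = m - 1 := by
      rw [Finset.card_erase_of_mem (Finset.mem_univ _), Finset.card_univ, Fintype.card_fin]
    rw [← hts]
    apply stepCount _ a₂ (univ.erase v₁)
    · intro σ hσ
      rw [Finset.mem_filter] at hσ
      refine Finset.mem_erase.mpr ⟨?_, Finset.mem_univ _⟩
      intro he
      exact ha (σ.injective (he.trans hσ.2.symm)).symm
    · intro w₁ hw₁ w₂ hw₂ σ hσ
      rw [Finset.mem_filter] at hσ ⊢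
      refine ⟨Finset.mem_univ _, ?_⟩
      show Equiv.swap w₁ w₂ (σ a₁) = v₁
      rw [hσ.2, Equiv.swap_apply_of_ne_of_ne
        (fun h => (Finset.mem_erase.mp hw₁).1 h.symm)
        (fun h => (Finset.mem_erase.mp hw₂).1 h.symm)]
    · exact Finset.mem_erase.mpr ⟨hv.symm, Finset.mem_univ _⟩
  rw [← Finset.filter_filter]
  calc (_ : ℕ) * ((m - 1) * m)
      = ((univ.filter (fun σ : Equiv.Perm (Fin m) => σ a₁ = v₁)).filter
          (fun σ => σ a₂ = v₂)).card * (m - 1) * m := by ring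
    _ = (univ.filter (fun σ : Equiv.Perm (Fin m) => σ a₁ = v₁)).card * m := by rw [step2]
    _ = m.factorial := step1

lemma threePointCount {m : ℕ} (a₁ a₂ a₃ : Fin m) (v₁ v₂ v₃ : Fin m)
    (ha12 : a₁ ≠ a₂) (ha13 : a₁ ≠ a₃) (ha23 : a₂ ≠ a₃)
    (hv12 : v₁ ≠ v₂) (hv13 : v₁ ≠ v₃) (hv23 : v₂ ≠ v₃) :
    (univ.filter (fun σ : Equiv.Perm (Fin m) => σ a₁ = v₁ ∧ σ a₂ = v₂ ∧ σ a₃ = v₃)).card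
      * ((m - 2) * ((m - 1) * m)) = m.factorial := by
  classical
  have step12 := twoPointCount a₁ a₂ v₁ v₂ ha12 hv12
  have step3 : ((univ.filter (fun σ : Equiv.Perm (Fin m) => σ a₁ = v₁ ∧ σ a₂ = v₂)).filter
      (fun σ => σ a₃ = v₃)).card * (m - 2)
      = (univ.filter (fun σ : Equiv.Perm (Fin m) => σ a₁ = v₁ ∧ σ a₂ = v₂)).card := by
    have hts : (((univ : Finset (Fin m)).erase v₁).erase v₂).card = m - 2 := by
      rw [Finset.card_erase_of_mem (Finset.mem_erase.mpr ⟨hv12.symm, Finset.mem_univ _⟩),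
        Finset.card_erase_of_mem (Finset.mem_univ _), Finset.card_univ, Fintype.card_fin]
      omega
    rw [← hts]
    apply stepCount _ a₃ _
    · intro σ hσ
      rw [Finset.mem_filter] at hσ
      refine Finset.mem_erase.mpr ⟨?_, Finset.mem_erase.mpr ⟨?_, Finset.mem_univ _⟩⟩
      · intro he; exact ha23 (σ.injective (he.trans hσ.2.2.symm)).symm
      · intro he; exact ha13 (σ.injective (he.trans hσ.2.1.symm)).symm
    · intro w₁ hw₁ w₂ hw₂ σ hσ
      rw [Finset.mem_filter] at hσ ⊢
      have hw₁' := Finset.mem_erase.mp hw₁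
      have hw₂' := Finset.mem_erase.mp hw₂
      have hw₁'' := Finset.mem_erase.mp hw₁'.2
      have hw₂'' := Finset.mem_erase.mp hw₂'.2
      refine ⟨Finset.mem_univ _, ?_, ?_⟩
      · show Equiv.swap w₁ w₂ (σ a₁) = v₁
        rw [hσ.2.1, Equiv.swap_apply_of_ne_of_ne
          (fun h => hw₁''.1 h.symm) (fun h => hw₂''.1 h.symm)]
      · show Equiv.swap w₁ w₂ (σ a₂) = v₂
        rw [hσ.2.2, Equiv.swap_apply_of_ne_of_ne
          (fun h => hw₁'.1 h.symm) (fun h => hw₂'.1 h.symm)]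
    · exact Finset.mem_erase.mpr ⟨hv23.symm,
        Finset.mem_erase.mpr ⟨hv13.symm, Finset.mem_univ _⟩⟩
  have hsplit : (univ.filter (fun σ : Equiv.Perm (Fin m) => σ a₁ = v₁ ∧ σ a₂ = v₂ ∧ σ a₃ = v₃))
      = (univ.filter (fun σ : Equiv.Perm (Fin m) => σ a₁ = v₁ ∧ σ a₂ = v₂)).filter
        (fun σ => σ a₃ = v₃) := by
    rw [Finset.filter_filter]
    apply Finset.filter_congr
    intro σ _
    constructor
    · rintro ⟨x, y, z⟩; exact ⟨⟨x, y⟩, z⟩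
    · rintro ⟨⟨x, y⟩, z⟩; exact ⟨x, y, z⟩
  rw [hsplit]
  calc (_ : ℕ) * ((m - 2) * ((m - 1) * m))
      = ((univ.filter (fun σ : Equiv.Perm (Fin m) => σ a₁ = v₁ ∧ σ a₂ = v₂)).filter
          (fun σ => σ a₃ = v₃)).card * (m - 2) * ((m - 1) * m) := by ring
    _ = (univ.filter (fun σ : Equiv.Perm (Fin m) => σ a₁ = v₁ ∧ σ a₂ = v₂)).card
          * ((m - 1) * m) := by rw [step3]
    _ = m.factorial := step12

lemma halfCount {m : ℕ} (a₁ a₂ b₁ b₂ : Fin m) (v₁ v₂ : Fin m)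
    (hb : b₁ ≠ b₂) (hb₁₁ : b₁ ≠ a₁) (hb₁₂ : b₁ ≠ a₂) (hb₂₁ : b₂ ≠ a₁) (hb₂₂ : b₂ ≠ a₂) :
    (univ.filter (fun σ : Equiv.Perm (Fin m) => σ a₁ = v₁ ∧ σ a₂ = v₂ ∧ σ b₁ < σ b₂)).card * 2
      = (univ.filter (fun σ : Equiv.Perm (Fin m) => σ a₁ = v₁ ∧ σ a₂ = v₂)).card := by
  classical
  set B := univ.filter (fun σ : Equiv.Perm (Fin m) => σ a₁ = v₁ ∧ σ a₂ = v₂) with hB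
  have hsplit : (univ.filter (fun σ : Equiv.Perm (Fin m) =>
      σ a₁ = v₁ ∧ σ a₂ = v₂ ∧ σ b₁ < σ b₂)) = B.filter (fun σ => σ b₁ < σ b₂) := by
    rw [hB, Finset.filter_filter]
    apply Finset.filter_congr
    intro σ _
    constructor
    · rintro ⟨x, y, z⟩; exact ⟨⟨x, y⟩, z⟩
    · rintro ⟨⟨x, y⟩, z⟩; exact ⟨x, y, z⟩
  have hbij : (B.filter (fun σ => σ b₁ < σ b₂)).card
      = (B.filter (fun σ => ¬ σ b₁ < σ b₂)).card := by
    apply Finset.card_bij' (fun σ _ => σ * Equiv.swap b₁ b₂) (fun σ _ => σ * Equiv.swap b₁ b₂)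
    · intro σ hσ
      rw [Finset.mem_filter] at hσ ⊢
      obtain ⟨hσB, hlt⟩ := hσ
      rw [hB, Finset.mem_filter] at hσB ⊢
      have e1 : (σ * Equiv.swap b₁ b₂) a₁ = σ a₁ := by
        show σ (Equiv.swap b₁ b₂ a₁) = σ a₁
        rw [Equiv.swap_apply_of_ne_of_ne (Ne.symm hb₁₁) (Ne.symm hb₂₁)]
      have e2 : (σ * Equiv.swap b₁ b₂) a₂ = σ a₂ := by
        show σ (Equiv.swap b₁ b₂ a₂) = σ a₂
        rw [Equiv.swap_apply_of_ne_of_ne (Ne.symm hb₁₂) (Ne.symm hb₂₂)]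
      have e3 : (σ * Equiv.swap b₁ b₂) b₁ = σ b₂ := by
        show σ (Equiv.swap b₁ b₂ b₁) = σ b₂
        rw [Equiv.swap_apply_left]
      have e4 : (σ * Equiv.swap b₁ b₂) b₂ = σ b₁ := by
        show σ (Equiv.swap b₁ b₂ b₂) = σ b₁
        rw [Equiv.swap_apply_right]
      refine ⟨⟨Finset.mem_univ _, e1.trans hσB.2.1, e2.trans hσB.2.2⟩, ?_⟩
      rw [e3, e4]
      exact lt_asymm hlt
    · intro σ hσ
      rw [Finset.mem_filter] at hσ ⊢
      obtain ⟨hσB, hlt⟩ := hσ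
      rw [hB, Finset.mem_filter] at hσB ⊢
      have e1 : (σ * Equiv.swap b₁ b₂) a₁ = σ a₁ := by
        show σ (Equiv.swap b₁ b₂ a₁) = σ a₁
        rw [Equiv.swap_apply_of_ne_of_ne (Ne.symm hb₁₁) (Ne.symm hb₂₁)]
      have e2 : (σ * Equiv.swap b₁ b₂) a₂ = σ a₂ := by
        show σ (Equiv.swap b₁ b₂ a₂) = σ a₂
        rw [Equiv.swap_apply_of_ne_of_ne (Ne.symm hb₁₂) (Ne.symm hb₂₂)]
      have e3 : (σ * Equiv.swap b₁ b₂) b₁ = σ b₂ := by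
        show σ (Equiv.swap b₁ b₂ b₁) = σ b₂
        rw [Equiv.swap_apply_left]
      have e4 : (σ * Equiv.swap b₁ b₂) b₂ = σ b₁ := by
        show σ (Equiv.swap b₁ b₂ b₂) = σ b₁
        rw [Equiv.swap_apply_right]
      refine ⟨⟨Finset.mem_univ _, e1.trans hσB.2.1, e2.trans hσB.2.2⟩, ?_⟩
      rw [e3, e4]
      have hne : σ b₂ ≠ σ b₁ := fun he => hb (σ.injective he.symm)
      exact lt_of_le_of_ne (le_of_not_gt hlt) hne
    · intro σ _
      show σ * Equiv.swap b₁ b₂ * Equiv.swap b₁ b₂ = σ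
      rw [mul_assoc, Equiv.swap_mul_self, mul_one]
    · intro σ _
      show σ * Equiv.swap b₁ b₂ * Equiv.swap b₁ b₂ = σ
      rw [mul_assoc, Equiv.swap_mul_self, mul_one]
  have := Finset.card_filter_add_card_filter_not
    (s := B) (p := fun σ => σ b₁ < σ b₂)
  rw [hsplit]
  omega

lemma positionCount {n r : ℕ} (hrn : r ≤ n) (hr : 1 ≤ r) (v : Fin n) :
    (univ.filter (fun π : Equiv.Perm (Fin n) => (π.symm v).1 < r)).card * n
      = r * n.factorial := by
  classical
  have hfilt : (univ.filter (fun π : Equiv.Perm (Fin n) => (π.symm v).1 < r))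
      = univ.filter (fun π : Equiv.Perm (Fin n) =>
          π.symm v ∈ (univ.filter (fun x : Fin n => x.1 < r))) := by
    apply Finset.filter_congr
    intro π _
    simp
  have hucard : (univ.filter (fun x : Fin n => x.1 < r)).card = r := by
    have hset : (univ.filter (fun x : Fin n => x.1 < r))
        = (univ : Finset (Fin r)).map (Fin.castLEEmb hrn) := by
      ext x
      simp only [Finset.mem_filter, Finset.mem_map, Finset.mem_univ, true_and]
      constructor
      · intro hx
        exact ⟨⟨x.1, hx⟩, Fin.ext rfl⟩
      · rintro ⟨y, rfl⟩
        exact y.2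
    rw [hset, Finset.card_map, Finset.card_univ, Fintype.card_fin]
  have := fib (univ : Finset (Equiv.Perm (Fin n))) (fun π => π.symm v)
    (univ : Finset (Fin n)) (univ.filter (fun x : Fin n => x.1 < r))
    (Finset.filter_subset _ _) (fun π _ => Finset.mem_univ _) ?h2
  · rw [hfilt]
    simp only [Finset.card_univ, Fintype.card_perm, Fintype.card_fin, hucard] at this
    convert this using 4
  case h2 =>
    intro t₁ _ t₂ _
    apply feq _ _ (Equiv.mulRight (Equiv.swap t₁ t₂)) t₁ t₂
    · intro π _; exact Finset.mem_univ _
    · intro π _; exact Finset.mem_univ _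
    · intro π _ hπ
      show ((π * Equiv.swap t₁ t₂).symm) v = t₂
      have : (π * Equiv.swap t₁ t₂).symm v = (Equiv.swap t₁ t₂).symm (π.symm v) := rfl
      rw [this, hπ, Equiv.symm_swap, Equiv.swap_apply_left]
    · intro π _ hπ
      have he : (Equiv.mulRight (Equiv.swap t₁ t₂)).symm π = π * Equiv.swap t₁ t₂ := by
        simp [Equiv.swap_inv]
      rw [he]
      show ((π * Equiv.swap t₁ t₂).symm) v = t₁
      have : (π * Equiv.swap t₁ t₂).symm v = (Equiv.swap t₁ t₂).symm (π.symm v) := rfl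
      rw [this, hπ, Equiv.symm_swap, Equiv.swap_apply_right]

lemma pattFib {n r : ℕ} (hrn : r ≤ n) (s : Finset (Equiv.Perm (Fin n)))
    (hs : ∀ τ : Equiv.Perm (Fin r), ∀ π ∈ s, π * extPerm hrn τ ∈ s)
    (u : Finset (Equiv.Perm (Fin r))) :
    (s.filter (fun π => pattPerm hrn π ∈ u)).card * r.factorial = u.card * s.card := by
  classical
  have := fib s (fun π => pattPerm hrn π) (univ : Finset (Equiv.Perm (Fin r))) u
    (Finset.subset_univ _) (fun π _ => Finset.mem_univ _) ?h2
  · rw [Finset.card_univ, Fintype.card_perm, Fintype.card_fin] at this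
    convert this using 4
  case h2 =>
    intro σ₁ _ σ₂ _
    apply feq _ _ (Equiv.mulRight (extPerm hrn (σ₁⁻¹ * σ₂))) σ₁ σ₂
    · intro π hπ; exact hs _ π hπ
    · intro π hπ
      have he : (Equiv.mulRight (extPerm hrn (σ₁⁻¹ * σ₂))).symm π
          = π * extPerm hrn (σ₁⁻¹ * σ₂)⁻¹ := by
        simp only [Equiv.mulRight_symm, Equiv.coe_mulRight]
        congr 1
      rw [he]
      exact hs _ π hπ
    · intro π _ hπ
      show pattPerm hrn (π * extPerm hrn (σ₁⁻¹ * σ₂)) = σ₂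
      rw [pattPerm_mul_ext, hπ]
      group
    · intro π _ hπ
      have he : (Equiv.mulRight (extPerm hrn (σ₁⁻¹ * σ₂))).symm π
          = π * extPerm hrn (σ₁⁻¹ * σ₂)⁻¹ := by
        simp only [Equiv.mulRight_symm, Equiv.coe_mulRight]
        congr 1
      rw [he, pattPerm_mul_ext, hπ]
      group

/-- `P(X = {1,3,r}) = (1/2)(1/(r-1) - 1/r) + (1/n)(1/(r-2) - 1/(r-1))`. -/
theorem stmt_10 (n r : ℕ) (hn : 4 ≤ n) (hr4 : 4 ≤ r) (hrn : r ≤ n) :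
    ((Finset.univ.filter (fun π : Equiv.Perm (Fin n) =>
        FirstIncTripleAt n π ⟨0, by omega⟩ ⟨2, by omega⟩ ⟨r - 1, by omega⟩)).card : ℚ)
        / (Nat.factorial n : ℚ)
      = (1 / 2) * (1 / ((r : ℚ) - 1) - 1 / (r : ℚ))
        + (1 / (n : ℚ)) * (1 / ((r : ℚ) - 2) - 1 / ((r : ℚ) - 1)) := by
  classical
  have h0 : 0 < n := by omega
  have h1 : 1 < n := by omega
  have h2 : 2 < n := by omega
  have hcn : r - 1 < n := by omega
  have htn : n - 1 < n := by omega
  have q0 : 0 < r := by omega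
  have q1 : 1 < r := by omega
  have q2 : 2 < r := by omega
  have ql : r - 1 < r := by omega
  have qv2 : r - 2 < r := by omega
  have qv3 : r - 3 < r := by omega
  set A1 : Finset (Equiv.Perm (Fin r)) := univ.filter (fun σ =>
    σ ⟨r - 1, ql⟩ = ⟨r - 1, ql⟩ ∧ σ ⟨2, q2⟩ = ⟨r - 2, qv2⟩ ∧ σ ⟨1, q1⟩ < σ ⟨0, q0⟩) with hA1
  set A2 : Finset (Equiv.Perm (Fin r)) := univ.filter (fun σ =>
    σ ⟨1, q1⟩ = ⟨r - 1, ql⟩ ∧ σ ⟨r - 1, ql⟩ = ⟨r - 2, qv2⟩ ∧ σ ⟨2, q2⟩ = ⟨r - 3, qv3⟩) with hA2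
  set X2 : Finset (Equiv.Perm (Fin n)) := univ.filter (fun π =>
    (π.symm ⟨n - 1, htn⟩).1 < r) with hX2
  -- split the event
  have hsplit : (univ.filter (fun π : Equiv.Perm (Fin n) =>
      FirstIncTripleAt n π ⟨0, by omega⟩ ⟨2, by omega⟩ ⟨r - 1, by omega⟩)).card
      = (univ.filter (fun π : Equiv.Perm (Fin n) => pattPerm hrn π ∈ A1)).card
        + (X2.filter (fun π => pattPerm hrn π ∈ A2)).card := by
    have e1 : (univ.filter (fun π : Equiv.Perm (Fin n) =>
        FirstIncTripleAt n π ⟨0, by omega⟩ ⟨2, by omega⟩ ⟨r - 1, by omega⟩))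
        = univ.filter (fun π : Equiv.Perm (Fin n) =>
          ((π ⟨1, h1⟩ < π ⟨0, h0⟩) ∧ π ⟨0, h0⟩ < π ⟨2, h2⟩ ∧ π ⟨2, h2⟩ < π ⟨r - 1, hcn⟩ ∧
            ∀ f : Fin n, 2 < f.1 → f.1 < r - 1 → π f < π ⟨2, h2⟩) ∨
          ((∀ f : Fin n, f ≠ ⟨1, h1⟩ → π f < π ⟨1, h1⟩) ∧ π ⟨0, h0⟩ < π ⟨2, h2⟩ ∧
            π ⟨2, h2⟩ < π ⟨r - 1, hcn⟩ ∧
            ∀ f : Fin n, 2 < f.1 → f.1 < r - 1 → π f < π ⟨2, h2⟩)) := by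
      apply Finset.filter_congr
      intro π _
      rw [logicChar hn hr4 hrn π, or_and_right]
    rw [e1, Finset.filter_or]
    have hdisj : Disjoint
        (univ.filter (fun π : Equiv.Perm (Fin n) =>
          (π ⟨1, h1⟩ < π ⟨0, h0⟩) ∧ π ⟨0, h0⟩ < π ⟨2, h2⟩ ∧ π ⟨2, h2⟩ < π ⟨r - 1, hcn⟩ ∧
            ∀ f : Fin n, 2 < f.1 → f.1 < r - 1 → π f < π ⟨2, h2⟩))
        (univ.filter (fun π : Equiv.Perm (Fin n) =>
          (∀ f : Fin n, f ≠ ⟨1, h1⟩ → π f < π ⟨1, h1⟩) ∧ π ⟨0, h0⟩ < π ⟨2, h2⟩ ∧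
            π ⟨2, h2⟩ < π ⟨r - 1, hcn⟩ ∧
            ∀ f : Fin n, 2 < f.1 → f.1 < r - 1 → π f < π ⟨2, h2⟩)) := by
      rw [Finset.disjoint_left]
      intro π hπ1 hπ2
      rw [Finset.mem_filter] at hπ1 hπ2
      have ha := hπ1.2.1
      have hb := hπ2.2.1 ⟨0, h0⟩ (fun he => by
        have := congrArg Fin.val he; simp only [Fin.val_mk] at this; omega)
      exact absurd (lt_trans ha hb) (lt_irrefl _)
    rw [Finset.card_union_of_disjoint hdisj]
    congr 1
    · apply congrArg
      apply Finset.filter_congr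
      intro π _
      rw [charD1 hn hr4 hrn π, hA1]
      simp only [Finset.mem_filter, Finset.mem_univ, true_and]
    · apply congrArg
      rw [Finset.filter_filter]
      apply Finset.filter_congr
      intro π _
      rw [charD2 hn hr4 hrn π, hA2]
      simp only [Finset.mem_filter, Finset.mem_univ, true_and]
  -- the five counting identities (ℕ)
  have count1 : (univ.filter (fun π : Equiv.Perm (Fin n) => pattPerm hrn π ∈ A1)).card
      * r.factorial = A1.card * n.factorial := by
    have := pattFib hrn univ (fun τ π _ => Finset.mem_univ _) A1
    rwa [Finset.card_univ, Fintype.card_perm, Fintype.card_fin] at this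
  have countA1 : A1.card * 2 * ((r - 1) * r) = r.factorial := by
    have hhalf := halfCount (m := r) ⟨r - 1, ql⟩ ⟨2, q2⟩ ⟨1, q1⟩ ⟨0, q0⟩ ⟨r - 1, ql⟩ ⟨r - 2, qv2⟩
      (fun he => by have := congrArg Fin.val he; simp only [Fin.val_mk] at this; omega)
      (fun he => by have := congrArg Fin.val he; simp only [Fin.val_mk] at this; omega)
      (fun he => by have := congrArg Fin.val he; simp only [Fin.val_mk] at this; omega)
      (fun he => by have := congrArg Fin.val he; simp only [Fin.val_mk] at this; omega)
      (fun he => by have := congrArg Fin.val he; simp only [Fin.val_mk] at this; omega)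
    have htwo := twoPointCount (m := r) ⟨r - 1, ql⟩ ⟨2, q2⟩ ⟨r - 1, ql⟩ ⟨r - 2, qv2⟩
      (fun he => by have := congrArg Fin.val he; simp only [Fin.val_mk] at this; omega)
      (fun he => by have := congrArg Fin.val he; simp only [Fin.val_mk] at this; omega)
    rw [hA1]
    calc (univ.filter (fun σ : Equiv.Perm (Fin r) =>
          σ ⟨r - 1, ql⟩ = ⟨r - 1, ql⟩ ∧ σ ⟨2, q2⟩ = ⟨r - 2, qv2⟩ ∧
            σ ⟨1, q1⟩ < σ ⟨0, q0⟩)).card * 2 * ((r - 1) * r)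
        = (univ.filter (fun σ : Equiv.Perm (Fin r) =>
            σ ⟨r - 1, ql⟩ = ⟨r - 1, ql⟩ ∧ σ ⟨2, q2⟩ = ⟨r - 2, qv2⟩)).card * ((r - 1) * r) := by
          rw [hhalf]
      _ = r.factorial := htwo
  have count2 : (X2.filter (fun π => pattPerm hrn π ∈ A2)).card * r.factorial
      = A2.card * X2.card := by
    apply pattFib hrn X2 _ A2
    intro τ π hπ
    rw [hX2, Finset.mem_filter] at hπ ⊢
    refine ⟨Finset.mem_univ _, ?_⟩
    have he : (π * extPerm hrn τ).symm ⟨n - 1, htn⟩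
        = (extPerm hrn τ).symm (π.symm ⟨n - 1, htn⟩) := rfl
    rw [he, extPerm_symm, extPerm_val_lt]
    exact hπ.2
  have countA2 : A2.card * ((r - 2) * ((r - 1) * r)) = r.factorial := by
    have := threePointCount (m := r) ⟨1, q1⟩ ⟨r - 1, ql⟩ ⟨2, q2⟩
      ⟨r - 1, ql⟩ ⟨r - 2, qv2⟩ ⟨r - 3, qv3⟩
      (fun he => by have := congrArg Fin.val he; simp only [Fin.val_mk] at this; omega)
      (fun he => by have := congrArg Fin.val he; simp only [Fin.val_mk] at this; omega)
      (fun he => by have := congrArg Fin.val he; simp only [Fin.val_mk] at this; omega)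
      (fun he => by have := congrArg Fin.val he; simp only [Fin.val_mk] at this; omega)
      (fun he => by have := congrArg Fin.val he; simp only [Fin.val_mk] at this; omega)
      (fun he => by have := congrArg Fin.val he; simp only [Fin.val_mk] at this; omega)
    rw [hA2]
    exact this
  have countX2 : X2.card * n = r * n.factorial := by
    rw [hX2]
    exact positionCount hrn (by omega) ⟨n - 1, htn⟩
  -- arithmetic
  obtain ⟨k, rfl⟩ : ∃ k, r = k + 4 := ⟨r - 4, by omega⟩
  have s1 : k + 4 - 1 = k + 3 := by omega
  have s2 : k + 4 - 2 = k + 2 := by omega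
  rw [s1] at countA1
  rw [s1, s2] at countA2
  rw [hsplit]
  push_cast
  have hfn : ((n.factorial : ℚ)) ≠ 0 := by
    exact_mod_cast Nat.factorial_ne_zero n
  have hfr : (((k + 4).factorial : ℚ)) ≠ 0 := by
    exact_mod_cast Nat.factorial_ne_zero (k + 4)
  have hN : (0:ℚ) < (n:ℚ) := by exact_mod_cast h0
  have K2 : ((k:ℚ) + 2) ≠ 0 := by positivity
  have K3 : ((k:ℚ) + 3) ≠ 0 := by positivity
  have K4 : ((k:ℚ) + 4) ≠ 0 := by positivity
  have Q1 : ((univ.filter (fun π : Equiv.Perm (Fin n) =>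
        pattPerm hrn π ∈ A1)).card : ℚ) * ((k + 4).factorial : ℚ)
      = (A1.card : ℚ) * (n.factorial : ℚ) := by exact_mod_cast count1
  have Q2 : (A1.card : ℚ) * 2 * (((k:ℚ) + 3) * ((k:ℚ) + 4)) = ((k + 4).factorial : ℚ) := by
    exact_mod_cast countA1
  have Q3 : ((X2.filter (fun π => pattPerm hrn π ∈ A2)).card : ℚ) * ((k + 4).factorial : ℚ)
      = (A2.card : ℚ) * (X2.card : ℚ) := by exact_mod_cast count2
  have Q4 : (A2.card : ℚ) * (((k:ℚ) + 2) * (((k:ℚ) + 3) * ((k:ℚ) + 4)))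
      = ((k + 4).factorial : ℚ) := by exact_mod_cast countA2
  have Q5 : (X2.card : ℚ) * (n : ℚ) = ((k:ℚ) + 4) * (n.factorial : ℚ) := by
    exact_mod_cast countX2
  have hc1 : ((univ.filter (fun π : Equiv.Perm (Fin n) =>
      pattPerm hrn π ∈ A1)).card : ℚ) * (2 * (((k:ℚ) + 3) * ((k:ℚ) + 4)))
      = (n.factorial : ℚ) := by
    apply mul_left_cancel₀ hfr
    linear_combination (2 * (((k:ℚ) + 3) * ((k:ℚ) + 4))) * Q1 + ((n.factorial : ℚ)) * Q2
  have hc2 : ((X2.filter (fun π => pattPerm hrn π ∈ A2)).card : ℚ)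
      * ((n:ℚ) * (((k:ℚ) + 2) * ((k:ℚ) + 3))) = (n.factorial : ℚ) := by
    apply mul_left_cancel₀ (mul_ne_zero hfr K4)
    linear_combination ((n:ℚ) * (((k:ℚ) + 2) * (((k:ℚ) + 3) * ((k:ℚ) + 4)))) * Q3
      + ((A2.card : ℚ) * (((k:ℚ) + 2) * (((k:ℚ) + 3) * ((k:ℚ) + 4)))) * Q5
      + (((k:ℚ) + 4) * (n.factorial : ℚ)) * Q4
  have hc1d : ((univ.filter (fun π : Equiv.Perm (Fin n) =>
      pattPerm hrn π ∈ A1)).card : ℚ)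
      = (n.factorial : ℚ) / (2 * (((k:ℚ) + 3) * ((k:ℚ) + 4))) := by
    rw [eq_div_iff (by positivity)]
    exact hc1
  have hc2d : ((X2.filter (fun π => pattPerm hrn π ∈ A2)).card : ℚ)
      = (n.factorial : ℚ) / ((n:ℚ) * (((k:ℚ) + 2) * ((k:ℚ) + 3))) := by
    rw [eq_div_iff (by positivity)]
    exact hc2
  rw [hc1d, hc2d]
  have hNne : (n:ℚ) ≠ 0 := ne_of_gt hN
  have K2' : (2 + (k:ℚ)) ≠ 0 := by positivity
  have K3' : (3 + (k:ℚ)) ≠ 0 := by positivity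
  have K4' : (4 + (k:ℚ)) ≠ 0 := by positivity
  rw [show ((k:ℚ) + 4 : ℚ) - 1 = (k:ℚ) + 3 by ring, show ((k:ℚ) + 4 : ℚ) - 2 = (k:ℚ) + 2 by ring]
  field_simp
  ring
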